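/- Let A_N f(x) = ϑ(N)^{-1} Σ_{p odd prime ≤ N} (log p) f(x−p), and let S_N f(x) = (log N / N) Σ_{p odd prime ≤ N} f(x−p) be the unweighted (log-normalized) average. Then for every nonnegative function f on ℤ and every x, sup_N S_N f(x) ≤ C sup_N A_N f(x) for an absolute constant C. -/

import Mathlib

/-- Chebyshev's theta function ϑ(N) = Σ_{p prime ≤ N} log p. -/
noncomputable def chebTheta (N : ℕ) : ℝ :=
  ∑ p ∈ (Finset.range (N + 1)).filter Nat.Prime, Real.log p

/-- The logarithmically weighted average along the odd primes:
A_N f(x) = ϑ(N)⁻¹ Σ_{p odd prime ≤ N} (log p) f(x - p). -/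
noncomputable def primeAvg (N : ℕ) (f : ℤ → ℝ) (x : ℤ) : ℝ :=
  (chebTheta N)⁻¹ *
    ∑ p ∈ (Finset.range (N + 1)).filter (fun p => p.Prime ∧ p ≠ 2),
      Real.log p * f (x - p)

/-- The unweighted log-normalized average along the odd primes:
S_N f(x) = (log N / N) Σ_{p odd prime ≤ N} f(x - p). -/
noncomputable def unweightedPrimeAvg (N : ℕ) (f : ℤ → ℝ) (x : ℤ) : ℝ :=
  (Real.log N / N) *
    ∑ p ∈ (Finset.range (N + 1)).filter (fun p => p.Prime ∧ p ≠ 2), f (x - p)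

lemma chebTheta_nonneg (n : ℕ) : 0 ≤ chebTheta n :=
  Finset.sum_nonneg fun p _ => Real.log_natCast_nonneg p

lemma chebTheta_pos {n : ℕ} (hn : 3 ≤ n) : 0 < chebTheta n := by
  have h2 : (2 : ℕ) ∈ (Finset.range (n + 1)).filter Nat.Prime := by
    simp only [Finset.mem_filter, Finset.mem_range]
    exact ⟨by omega, Nat.prime_two⟩
  calc (0 : ℝ) < Real.log 2 := Real.log_pos (by norm_num)
    _ = Real.log ((2 : ℕ) : ℝ) := by norm_num
    _ ≤ chebTheta n :=
      Finset.single_le_sum (f := fun p : ℕ => Real.log p)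
        (fun p _ => Real.log_natCast_nonneg p) h2

lemma chebTheta_le (n : ℕ) : chebTheta n ≤ n * Real.log 4 := by
  have hne : ∀ p ∈ (Finset.range (n + 1)).filter Nat.Prime, ((p : ℝ) ≠ 0) := by
    intro p hp
    simp only [Finset.mem_filter] at hp
    exact_mod_cast hp.2.pos.ne'
  have h1 : chebTheta n = Real.log (∏ p ∈ (Finset.range (n + 1)).filter Nat.Prime, (p : ℝ)) :=
    (Real.log_prod hne).symm
  have h2 : (∏ p ∈ (Finset.range (n + 1)).filter Nat.Prime, (p : ℝ))
      = ((primorial n : ℕ) : ℝ) := by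
    rw [primorial]; push_cast; rfl
  rw [h1, h2]
  calc Real.log ((primorial n : ℕ) : ℝ) ≤ Real.log ((4 : ℝ) ^ n) := by
        apply Real.log_le_log (by exact_mod_cast primorial_pos n)
        exact_mod_cast primorial_le_4_pow n
    _ = n * Real.log 4 := by rw [Real.log_pow]

theorem unweighted_dominated_by_weighted :
    ∃ C : ℝ, 0 < C ∧ ∀ f : ℤ → ℝ, (∀ x, 0 ≤ f x) → ∀ x : ℤ,
      ∀ N : ℕ, 3 ≤ N → ∀ c : ℝ,
        (∀ M : ℕ, 3 ≤ M → primeAvg M f x ≤ c) →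
        unweightedPrimeAvg N f x ≤ C * c := by
  have hK4 : (0 : ℝ) < Real.log 4 := Real.log_pos (by norm_num)
  have hK3 : (0 : ℝ) < Real.log 3 := Real.log_pos (by norm_num)
  refine ⟨6 * Real.log 4 / Real.log 3 + 2 * Real.log 4, by positivity, ?_⟩
  intro f hf x N hN c hc
  set T : ℕ → Finset ℕ :=
    fun n => (Finset.range (n + 1)).filter (fun p => p.Prime ∧ p ≠ 2) with hT
  -- c is nonnegative
  have hc0 : 0 ≤ c := by
    refine le_trans ?_ (hc 3 le_rfl)
    apply mul_nonneg (inv_nonneg.2 (chebTheta_nonneg 3))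
    exact Finset.sum_nonneg fun p _ => mul_nonneg (Real.log_natCast_nonneg p) (hf _)
  -- key bound on the log-weighted sum, for every scale M ≥ 3
  have key : ∀ M : ℕ, 3 ≤ M →
      ∑ p ∈ T M, Real.log p * f (x - p) ≤ Real.log 4 * M * c := by
    intro M hM
    have hθ := chebTheta_pos hM
    have h1 : ∑ p ∈ T M, Real.log p * f (x - p) = chebTheta M * primeAvg M f x := by
      rw [primeAvg, ← mul_assoc, mul_inv_cancel₀ hθ.ne', one_mul]
    rw [h1]
    calc chebTheta M * primeAvg M f x ≤ chebTheta M * c :=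
          mul_le_mul_of_nonneg_left (hc M hM) hθ.le
      _ ≤ (M * Real.log 4) * c := mul_le_mul_of_nonneg_right (chebTheta_le M) hc0
      _ = Real.log 4 * M * c := by ring
  set M : ℕ := max 3 (Nat.sqrt N) with hMdef
  have hM3 : 3 ≤ M := le_max_left _ _
  have hN0 : (0 : ℝ) < N := by exact_mod_cast Nat.lt_of_lt_of_le (by norm_num) hN
  have hL : (0 : ℝ) < Real.log N := Real.log_pos (by exact_mod_cast Nat.lt_of_lt_of_le (by norm_num) hN)
  have hsqrt : Real.sqrt N * Real.sqrt N = N := Real.mul_self_sqrt hN0.le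
  have hsqrt1 : (1 : ℝ) ≤ Real.sqrt N := by
    rw [show (1:ℝ) = Real.sqrt 1 by simp]
    exact Real.sqrt_le_sqrt (by exact_mod_cast Nat.one_le_iff_ne_zero.2 (by omega))
  -- (M : ℝ) ≤ 3 √N
  have hMle : (M : ℝ) ≤ 3 * Real.sqrt N := by
    have h1 : (Nat.sqrt N : ℝ) ≤ Real.sqrt N := by
      rw [show (Nat.sqrt N : ℝ) = Real.sqrt ((Nat.sqrt N : ℝ) ^ 2) by
            rw [Real.sqrt_sq (by positivity)]]
      apply Real.sqrt_le_sqrt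
      have := Nat.sqrt_le' N
      exact_mod_cast (by push_cast; exact_mod_cast this : ((Nat.sqrt N : ℕ) ^ 2 : ℝ) ≤ (N : ℝ))
    have h2 : ((max 3 (Nat.sqrt N) : ℕ) : ℝ) ≤ max 3 (Nat.sqrt N : ℝ) := by
      push_cast; simp
    calc (M : ℝ) ≤ max 3 ((Nat.sqrt N : ℕ) : ℝ) := h2
      _ ≤ 3 * Real.sqrt N := by
          apply max_le (by nlinarith) (by nlinarith)
  -- log N ≤ 2 √N
  have hLle : Real.log N ≤ 2 * Real.sqrt N := by
    have h1 : Real.log (Real.sqrt N) = Real.log N / 2 := Real.log_sqrt hN0.le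
    rw [show Real.log (N:ℝ) = 2 * Real.log (Real.sqrt N) by rw [h1]; ring]
    have := Real.log_le_sub_one_of_pos (show (0:ℝ) < Real.sqrt N by linarith)
    linarith
  -- split the sum
  have hsplit :
      ∑ p ∈ T N, f (x - p)
        = (∑ p ∈ (T N).filter (fun p => p ≤ M), f (x - p))
          + ∑ p ∈ (T N).filter (fun p => ¬ p ≤ M), f (x - p) :=
    (Finset.sum_filter_add_sum_filter_not (T N) _ _).symm
  -- small part
  have hsmall : ∑ p ∈ (T N).filter (fun p => p ≤ M), f (x - p)
      ≤ Real.log 4 * M * c / Real.log 3 := by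
    have hsub : (T N).filter (fun p => p ≤ M) ⊆ T M := by
      intro p hp
      simp only [hT, Finset.mem_filter, Finset.mem_range] at hp ⊢
      exact ⟨by omega, hp.1.2⟩
    have h1 : ∑ p ∈ (T N).filter (fun p => p ≤ M), f (x - p) ≤ ∑ p ∈ T M, f (x - p) :=
      Finset.sum_le_sum_of_subset_of_nonneg hsub (fun p _ _ => hf _)
    have h2 : ∑ p ∈ T M, f (x - p)
        ≤ (1 / Real.log 3) * ∑ p ∈ T M, Real.log p * f (x - p) := by
      rw [Finset.mul_sum]
      apply Finset.sum_le_sum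
      intro p hp
      simp only [hT, Finset.mem_filter, Finset.mem_range] at hp
      have hp3 : 3 ≤ p := by
        have h2 := hp.2.1.two_le
        have h3 := hp.2.2
        omega
      have hlogp : Real.log 3 ≤ Real.log p := by
        apply Real.log_le_log (by norm_num)
        exact_mod_cast hp3
      calc f (x - p) = (1 / Real.log 3) * (Real.log 3 * f (x - p)) := by
            field_simp
        _ ≤ (1 / Real.log 3) * (Real.log p * f (x - p)) := by
            apply mul_le_mul_of_nonneg_left _ (by positivity)
            exact mul_le_mul_of_nonneg_right hlogp (hf _)
    have h3 := key M hM3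
    calc ∑ p ∈ (T N).filter (fun p => p ≤ M), f (x - p)
        ≤ (1 / Real.log 3) * ∑ p ∈ T M, Real.log p * f (x - p) := le_trans h1 h2
      _ ≤ (1 / Real.log 3) * (Real.log 4 * M * c) :=
          mul_le_mul_of_nonneg_left h3 (by positivity)
      _ = Real.log 4 * M * c / Real.log 3 := by ring
  -- large part
  have hlarge : ∑ p ∈ (T N).filter (fun p => ¬ p ≤ M), f (x - p)
      ≤ (2 / Real.log N) * (Real.log 4 * N * c) := by
    have h2 : ∑ p ∈ (T N).filter (fun p => ¬ p ≤ M), f (x - p)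
        ≤ (2 / Real.log N) * ∑ p ∈ (T N).filter (fun p => ¬ p ≤ M),
            Real.log p * f (x - p) := by
      rw [Finset.mul_sum]
      apply Finset.sum_le_sum
      intro p hp
      simp only [hT, Finset.mem_filter, Finset.mem_range, not_le] at hp
      have hsq : N < p * p := Nat.sqrt_lt.1 (lt_of_le_of_lt (le_max_right 3 _) hp.2)
      have hlogp : Real.log N ≤ 2 * Real.log p := by
        calc Real.log N ≤ Real.log ((p : ℝ) * p) := by
              apply Real.log_le_log hN0
              exact_mod_cast hsq.le
          _ = 2 * Real.log p := by
              rw [Real.log_mul (by exact_mod_cast hp.1.2.1.pos.ne') (by exact_mod_cast hp.1.2.1.pos.ne')]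
              ring
      calc f (x - p) = (1 / Real.log N) * (Real.log N * f (x - p)) := by
            field_simp
        _ ≤ (1 / Real.log N) * (2 * Real.log p * f (x - p)) := by
            apply mul_le_mul_of_nonneg_left _ (by positivity)
            exact mul_le_mul_of_nonneg_right hlogp (hf _)
        _ = (2 / Real.log N) * (Real.log p * f (x - p)) := by ring
    have h3 : ∑ p ∈ (T N).filter (fun p => ¬ p ≤ M), Real.log p * f (x - p)
        ≤ ∑ p ∈ T N, Real.log p * f (x - p) :=
      Finset.sum_le_sum_of_subset_of_nonneg (Finset.filter_subset _ _)
        (fun p _ _ => mul_nonneg (Real.log_natCast_nonneg p) (hf _))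
    calc ∑ p ∈ (T N).filter (fun p => ¬ p ≤ M), f (x - p)
        ≤ (2 / Real.log N) * ∑ p ∈ (T N).filter (fun p => ¬ p ≤ M),
            Real.log p * f (x - p) := h2
      _ ≤ (2 / Real.log N) * ∑ p ∈ T N, Real.log p * f (x - p) :=
          mul_le_mul_of_nonneg_left h3 (by positivity)
      _ ≤ (2 / Real.log N) * (Real.log 4 * N * c) :=
          mul_le_mul_of_nonneg_left (key N hN) (by positivity)
  -- combine
  have hLN : 0 ≤ Real.log N / N := by positivity
  have hsum0 : 0 ≤ ∑ p ∈ (T N).filter (fun p => p ≤ M), f (x - p) :=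
    Finset.sum_nonneg fun p _ => hf _
  have hbound1 : (Real.log N / N) * (∑ p ∈ (T N).filter (fun p => p ≤ M), f (x - p))
      ≤ 6 * Real.log 4 / Real.log 3 * c := by
    have h1 : (Real.log N / N) * (∑ p ∈ (T N).filter (fun p => p ≤ M), f (x - p))
        ≤ (Real.log N / N) * (Real.log 4 * M * c / Real.log 3) :=
      mul_le_mul_of_nonneg_left hsmall hLN
    refine le_trans h1 ?_
    have hLM : Real.log N * (M : ℝ) ≤ 6 * N := by
      have := mul_le_mul hLle hMle (by positivity) (by positivity)
      nlinarith
    have hD : 0 ≤ Real.log 4 * c / Real.log 3 := by positivity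
    have h6 : Real.log (N:ℝ) / N * M ≤ 6 := by
      rw [div_mul_eq_mul_div, div_le_iff₀ hN0]
      linarith
    calc Real.log (N:ℝ) / N * (Real.log 4 * M * c / Real.log 3)
        = (Real.log 4 * c / Real.log 3) * (Real.log (N:ℝ) / N * M) := by ring
      _ ≤ (Real.log 4 * c / Real.log 3) * 6 := mul_le_mul_of_nonneg_left h6 hD
      _ = 6 * Real.log 4 / Real.log 3 * c := by ring
  have hbound2 : (Real.log N / N) * (∑ p ∈ (T N).filter (fun p => ¬ p ≤ M), f (x - p))
      ≤ 2 * Real.log 4 * c := by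
    have h1 := mul_le_mul_of_nonneg_left hlarge hLN
    refine le_trans h1 (le_of_eq ?_)
    field_simp
  have heq : unweightedPrimeAvg N f x
      = (Real.log N / N) * ∑ p ∈ T N, f (x - p) := rfl
  rw [heq, hsplit, mul_add]
  calc _ ≤ 6 * Real.log 4 / Real.log 3 * c + 2 * Real.log 4 * c :=
        add_le_add hbound1 hbound2
    _ = (6 * Real.log 4 / Real.log 3 + 2 * Real.log 4) * c := by ring
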